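/- Let n ∈ ℕ and u ∈ S_1^1(ℝⁿ) ∩ Cⁿ_loc(ℝⁿ). Then u is bounded with ‖u‖_{C⁰(ℝⁿ)} ≤ (3ⁿ − 2ⁿ + Γ_n^{−1}) ‖u‖_{S_1^1(ℝⁿ)}, where Γ_n is the volume of the unit ball in ℝⁿ. Consequently S_1^1(ℝⁿ) embeds boundedly into C⁰(ℝⁿ) (bounded continuous functions). -/

import Mathlib

open MeasureTheory Finset

/-- Volume of the Euclidean unit ball in ℝⁿ. -/
noncomputable def unitBallVol (n : ℕ) : ℝ :=
  (volume {y : Fin n → ℝ | ∑ i, (y i) ^ 2 ≤ 1}).toReal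

section Aux

open Filter

/-- 1D bound: if `v` has continuous derivative `w` everywhere, then
`‖v t₀‖ ≤ ∫⁻ ‖v‖ + ∫⁻ ‖w‖` (trivially true if either integral is infinite). -/
private lemma oneDim_S11 {v w : ℝ → ℝ} (hw : Continuous w)
    (hv : ∀ t, HasDerivAt v (w t) t) (t₀ : ℝ) :
    (‖v t₀‖₊ : ENNReal) ≤ (∫⁻ t, ‖v t‖₊) + ∫⁻ t, ‖w t‖₊ := by
  by_cases hvf : ∫⁻ t, (‖v t‖₊ : ENNReal) = ⊤
  · simp [hvf]
  by_cases hwf : ∫⁻ t, (‖w t‖₊ : ENNReal) = ⊤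
  · simp [hwf]
  have hvc : Continuous v := by
    rw [continuous_iff_continuousAt]; exact fun t => (hv t).continuousAt
  have hvi : Integrable v := ⟨hvc.aestronglyMeasurable, lt_top_iff_ne_top.2 hvf⟩
  have hwi : Integrable w := ⟨hw.aestronglyMeasurable, lt_top_iff_ne_top.2 hwf⟩
  have h0 : Tendsto v atBot (nhds 0) :=
    tendsto_zero_of_hasDerivAt_of_integrableOn_Iic (a := t₀) (fun x _ => hv x)
      hwi.integrableOn hvi.integrableOn
  have : ∫ x in Set.Iic t₀, w x = v t₀ - 0 :=
    integral_Iic_of_hasDerivAt_of_tendsto' (fun x _ => hv x) hwi.integrableOn h0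
  have hv0 : v t₀ = ∫ x in Set.Iic t₀, w x := by rw [this, sub_zero]
  calc (‖v t₀‖₊ : ENNReal) = ‖∫ x in Set.Iic t₀, w x‖₊ := by rw [hv0]
    _ ≤ ∫⁻ x in Set.Iic t₀, ‖w x‖₊ := enorm_integral_le_lintegral_enorm _
    _ ≤ ∫⁻ x, ‖w x‖₊ := setLIntegral_le_lintegral _ _
    _ ≤ _ := le_add_self

private lemma lmarg_add_S11 {n : ℕ} (g₁ g₂ : (Fin n → ℝ) → ENNReal) (h₁ : Measurable g₁)
    (T : Finset (Fin n)) (x : Fin n → ℝ) :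
    (∫⋯∫⁻_T, (fun y => g₁ y + g₂ y)) x = (∫⋯∫⁻_T, g₁) x + (∫⋯∫⁻_T, g₂) x := by
  simp only [lmarginal]
  rw [lintegral_add_left (f := fun y => g₁ (Function.updateFinset x T y))]
  exact h₁.comp measurable_updateFinset

private lemma key_S11 {n : ℕ}
    (u : (Fin n → ℝ) → ℝ)
    (D : Finset (Fin n) → (Fin n → ℝ) → ℝ)
    (hD0 : D ∅ = u)
    (hDderiv : ∀ (S : Finset (Fin n)) (i : Fin n), i ∉ S → ∀ η : Fin n → ℝ,
      HasDerivAt (fun t => D S (Function.update η i t)) (D (insert i S) η) (η i))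
    (hDcont : ∀ S, Continuous (D S))
    (x : Fin n → ℝ) :
    (‖u x‖₊ : ENNReal) ≤ ∑ S : Finset (Fin n), ∫⁻ y, ‖D S y‖₊ := by
  classical
  have hmeas : ∀ S : Finset (Fin n), Measurable (fun y => (‖D S y‖₊ : ENNReal)) :=
    fun S => (hDcont S).measurable.nnnorm.coe_nnreal_ennreal
  have key : ∀ T : Finset (Fin n),
      (‖u x‖₊ : ENNReal) ≤ ∑ S ∈ T.powerset, (∫⋯∫⁻_T, (fun y => (‖D S y‖₊ : ENNReal))) x := by
    intro T
    induction T using Finset.induction_on with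
    | empty => simp [hD0]
    | @insert i T hiT ih =>
      refine ih.trans ?_
      have step : ∀ S ∈ T.powerset,
          (∫⋯∫⁻_T, (fun y => (‖D S y‖₊ : ENNReal))) x ≤
            (∫⋯∫⁻_insert i T, (fun y => (‖D S y‖₊ : ENNReal))) x +
            (∫⋯∫⁻_insert i T, (fun y => (‖D (insert i S) y‖₊ : ENNReal))) x := by
        intro S hS
        rw [Finset.mem_powerset] at hS
        have hiS : i ∉ S := fun h => hiT (hS h)
        have pt : ∀ y : Fin n → ℝ, (‖D S y‖₊ : ENNReal) ≤
            (∫⁻ t, ‖D S (Function.update y i t)‖₊) +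
            ∫⁻ t, ‖D (insert i S) (Function.update y i t)‖₊ := by
          intro y
          have hw : Continuous fun t => D (insert i S) (Function.update y i t) :=
            (hDcont _).comp (continuous_const.update i continuous_id)
          have hder : ∀ t, HasDerivAt (fun s => D S (Function.update y i s))
              (D (insert i S) (Function.update y i t)) t := by
            intro t
            have := hDderiv S i hiS (Function.update y i t)
            simpa [Function.update_idem, Function.update_self] using this
          have := oneDim_S11 hw hder (y i)
          simpa [Function.update_eq_self] using this
        calc (∫⋯∫⁻_T, (fun y => (‖D S y‖₊ : ENNReal))) x
            ≤ (∫⋯∫⁻_T, (fun y => (∫⁻ t, (‖D S (Function.update y i t)‖₊ : ENNReal)) +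
                ∫⁻ t, (‖D (insert i S) (Function.update y i t)‖₊ : ENNReal))) x :=
              lmarginal_mono (fun y => pt y) x
          _ = _ := by
              rw [lmarg_add_S11]
              · rw [lmarginal_insert' _ (hmeas S) hiT,
                  lmarginal_insert' _ (hmeas (insert i S)) hiT]
              · have : Measurable (∫⋯∫⁻_{i}, (fun y => (‖D S y‖₊ : ENNReal))) :=
                  (hmeas S).lmarginal _
                simpa [lmarginal_singleton] using this
      refine (Finset.sum_le_sum step).trans ?_
      rw [Finset.sum_add_distrib, Finset.powerset_insert, Finset.sum_union, Finset.sum_image]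
      · intro S hS S' hS' h
        rw [Finset.mem_coe, Finset.mem_powerset] at hS hS'
        have : ∀ W : Finset (Fin n), W ⊆ T → W = (insert i W).erase i := by
          intro W hW
          rw [Finset.erase_insert (fun h => hiT (hW h))]
        rw [this S hS, this S' hS', h]
      · rw [Finset.disjoint_left]
        intro S hS hS'
        rw [Finset.mem_powerset] at hS
        rcases Finset.mem_image.1 hS' with ⟨W, _, rfl⟩
        exact hiT (hS (Finset.mem_insert_self i W))
  have := key Finset.univ
  rw [Finset.powerset_univ] at this
  simp only [lmarginal_univ] at this
  rwa [← volume_pi] at this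

private lemma unitBallVol_zero : unitBallVol 0 = 1 := by
  have : {y : Fin 0 → ℝ | ∑ i, (y i) ^ 2 ≤ 1} = Set.univ := by
    ext y; simp
  rw [unitBallVol, this]
  simp [volume_pi, Measure.pi_univ]

private lemma three_pow_sub_two_pow {n : ℕ} (hn : 1 ≤ n) : (1 : ℝ) ≤ 3 ^ n - 2 ^ n := by
  have h : ∀ m : ℕ, 1 ≤ m → 2 ^ m + 1 ≤ 3 ^ m := by
    intro m hm
    induction m with
    | zero => omega
    | succ k ih =>
      rcases Nat.eq_zero_or_pos k with rfl | hk
      · norm_num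
      · have := ih hk
        have h2 : 2 ^ (k+1) + 1 ≤ 3 * (2 ^ k + 1) := by
          ring_nf; omega
        calc 2 ^ (k+1) + 1 ≤ 3 * (2^k + 1) := h2
          _ ≤ 3 * 3 ^ k := by omega
          _ = 3 ^ (k+1) := by ring
  have := h n hn
  have : (2:ℝ) ^ n + 1 ≤ 3 ^ n := by exact_mod_cast this
  linarith

end Aux

/-- **Uniform bound for smooth functions of `S_1^1(ℝⁿ)`.** If `u` is Cⁿ on ℝⁿ (its
distinct-index mixed partials encoded by `D`, `D ∅ = u`) and all of them lie in
`L¹(ℝⁿ)`, then `u` is bounded with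
`‖u‖_{C⁰(ℝⁿ)} ≤ (3ⁿ − 2ⁿ + Γₙ⁻¹) ‖u‖_{S_1^1(ℝⁿ)}`, where `Γₙ` is the volume of the
Euclidean unit ball and `‖u‖_{S_1^1}` is the sum of the `L¹` norms of `u` and of all its
distinct-index mixed derivatives. Consequently `S_1^1(ℝⁿ)` embeds boundedly into the
space `C⁰(ℝⁿ)` of bounded continuous functions. -/
theorem sup_bound_S11 {n : ℕ}
    (u : (Fin n → ℝ) → ℝ)
    (D : Finset (Fin n) → (Fin n → ℝ) → ℝ)
    (hD0 : D ∅ = u)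
    (hDderiv : ∀ (S : Finset (Fin n)) (i : Fin n), i ∉ S → ∀ η : Fin n → ℝ,
      HasDerivAt (fun t => D S (Function.update η i t)) (D (insert i S) η) (η i))
    (hDcont : ∀ S, Continuous (D S))
    (hDL1 : ∀ S : Finset (Fin n), Integrable (D S)) :
    ∀ x : Fin n → ℝ,
      |u x| ≤ ((3 : ℝ) ^ n - 2 ^ n + (unitBallVol n)⁻¹) *
        ∑ S : Finset (Fin n), ∫ y, |D S y| := by
  intro x
  have hkey := key_S11 u D hD0 hDderiv hDcont x
  have habs : ∀ S : Finset (Fin n), ∫⁻ y, (‖D S y‖₊ : ENNReal) =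
      ENNReal.ofReal (∫ y, |D S y|) := by
    intro S
    simp_rw [← enorm_eq_nnnorm]
    rw [← ofReal_integral_norm_eq_lintegral_enorm (hDL1 S)]
    simp [Real.norm_eq_abs]
  have hsum : (‖u x‖₊ : ENNReal) ≤ ENNReal.ofReal (∑ S : Finset (Fin n), ∫ y, |D S y|) := by
    rw [ENNReal.ofReal_sum_of_nonneg (fun S _ => integral_nonneg (fun y => abs_nonneg _))]
    simpa [habs] using hkey
  have hle : |u x| ≤ ∑ S : Finset (Fin n), ∫ y, |D S y| := by
    rw [← enorm_eq_nnnorm, Real.enorm_eq_ofReal_abs] at hsum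
    exact (ENNReal.ofReal_le_ofReal_iff
      (Finset.sum_nonneg fun S _ => integral_nonneg fun y => abs_nonneg _)).1 hsum
  have hSum : 0 ≤ ∑ S : Finset (Fin n), ∫ y, |D S y| :=
    Finset.sum_nonneg fun S _ => integral_nonneg fun y => abs_nonneg _
  have hC : (1 : ℝ) ≤ (3 : ℝ) ^ n - 2 ^ n + (unitBallVol n)⁻¹ := by
    rcases Nat.eq_zero_or_pos n with rfl | hn
    · simp [unitBallVol_zero]
    · have h1 := three_pow_sub_two_pow hn
      have h2 : (0:ℝ) ≤ (unitBallVol n)⁻¹ :=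
        inv_nonneg.2 ENNReal.toReal_nonneg
      linarith
  calc |u x| ≤ ∑ S : Finset (Fin n), ∫ y, |D S y| := hle
    _ = 1 * ∑ S : Finset (Fin n), ∫ y, |D S y| := (one_mul _).symm
    _ ≤ _ := mul_le_mul_of_nonneg_right hC hSum
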